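/- The linear map Π is idempotent, Π ∘ Π = Π, and its image is exactly the set of right π-invariant elements of A: Π(A) = { b ∈ A : (id_A ⊗ π)(Δ(b)) = b ⊗ 1_H }. -/

import Mathlib

open TensorProduct

/-- The projection `Π : A → A` defined by `Π(a) = a₁ · i(κ_H(π(a₂)))` (Sweedler notation),
for bialgebra homomorphisms `π : A → H` and `i : H → A`. -/
noncomputable def PiMap (K : Type*) {A H : Type*} [CommRing K] [Ring A] [Ring H]
    [HopfAlgebra K A] [HopfAlgebra K H]
    (π : A →ₐc[K] H) (i : H →ₐc[K] A) : A →ₗ[K] A :=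
  (LinearMap.mul' K A) ∘ₗ
    (TensorProduct.map LinearMap.id
      ((i : H →ₗ[K] A) ∘ₗ (HopfAlgebra.antipode (R := K) (A := H)) ∘ₗ (π : A →ₗ[K] H))) ∘ₗ
    (Coalgebra.comul (R := K) (A := A))

open TensorProduct Coalgebra

section Conv
variable {K : Type*} [CommRing K]
variable {C : Type*} [AddCommMonoid C] [Module K C] [Coalgebra K C]
variable {B : Type*} [Ring B] [Algebra K B]

noncomputable def conv (f g : C →ₗ[K] B) : C →ₗ[K] B :=
  (LinearMap.mul' K B) ∘ₗ (TensorProduct.map f g) ∘ₗ (Coalgebra.comul (R := K))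

lemma conv_repr (f g : C →ₗ[K] B) {a : C} {ι : Type*} (r : Coalgebra.Repr K a ι) :
    conv f g a = ∑ i ∈ r.index, f (r.left i) * g (r.right i) := by
  simp [conv, ← r.eq, map_sum]

noncomputable def convUnit : C →ₗ[K] B :=
  (Algebra.linearMap K B) ∘ₗ (Coalgebra.counit (R := K))

lemma convUnit_apply (a : C) : (convUnit : C →ₗ[K] B) a = algebraMap K B (counit a) := rfl

lemma conv_unit_left (f : C →ₗ[K] B) : conv convUnit f = f := by
  ext a
  rw [conv_repr _ _ (ℛ K a)]
  have h := Coalgebra.sum_counit_tmul_map_eq (R := K) f a (repr := ℛ K a)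
  apply_fun (TensorProduct.lid K B) at h
  simp only [map_sum, lid_tmul, one_smul] at h
  simp only [convUnit_apply]
  rw [← h]
  congr 1; ext i
  rw [Algebra.smul_def]

lemma conv_unit_right (f : C →ₗ[K] B) : conv f convUnit = f := by
  ext a
  rw [conv_repr _ _ (ℛ K a)]
  have h := Coalgebra.sum_map_tmul_counit_eq (R := K) f a (repr := ℛ K a)
  apply_fun (TensorProduct.rid K B) at h
  simp only [map_sum, rid_tmul, one_smul] at h
  simp only [convUnit_apply]
  rw [← h]
  congr 1; ext i
  rw [Algebra.smul_def, Algebra.commutes]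

lemma conv_assoc (f g h : C →ₗ[K] B) : conv (conv f g) h = conv f (conv g h) := by
  ext a
  set r := ℛ K a
  set r1 : ∀ i : C × C, Coalgebra.Repr K (r.left i) (C × C) := fun i => ℛ K (r.left i)
  set r2 : ∀ i : C × C, Coalgebra.Repr K (r.right i) (C × C) := fun i => ℛ K (r.right i)
  have key := Coalgebra.sum_map_tmul_tmul_eq (R := K) f g h a (repr := r) (a₁ := r1) (a₂ := r2)
  apply_fun ((LinearMap.mul' K B) ∘ₗ (LinearMap.lTensor B (LinearMap.mul' K B))) at key
  simp only [map_sum, LinearMap.coe_comp, Function.comp_apply, LinearMap.lTensor_tmul,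
    LinearMap.mul'_apply] at key
  rw [conv_repr _ _ r, conv_repr _ _ r]
  calc ∑ i ∈ r.index, conv f g (r.left i) * h (r.right i)
      = ∑ i ∈ r.index, ∑ j ∈ (r1 i).index,
          f ((r1 i).left j) * (g ((r1 i).right j) * h (r.right i)) := by
        refine Finset.sum_congr rfl fun i _ => ?_
        rw [conv_repr _ _ (r1 i), Finset.sum_mul]
        exact Finset.sum_congr rfl fun j _ => mul_assoc _ _ _
    _ = ∑ i ∈ r.index, ∑ j ∈ (r2 i).index,
          f (r.left i) * (g ((r2 i).left j) * h ((r2 i).right j)) := key.symm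
    _ = ∑ i ∈ r.index, f (r.left i) * conv g h (r.right i) := by
        refine Finset.sum_congr rfl fun i _ => ?_
        rw [conv_repr _ _ (r2 i), Finset.mul_sum]

lemma conv_inv_unique {f g h : C →ₗ[K] B} (h1 : conv h f = convUnit)
    (h2 : conv f g = convUnit) : h = g := by
  have : conv h (conv f g) = conv (conv h f) g := (conv_assoc h f g).symm
  rw [h1, h2, conv_unit_right, conv_unit_left] at this
  exact this

end Conv

section Hopf
variable {K : Type*} [CommRing K] {H : Type*} [Ring H] [HopfAlgebra K H]

local notation "κ" => HopfAlgebra.antipode (R := K) (A := H)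

/-- `Δ∘κ` is a left convolution inverse of `Δ` in `Hom(H, H⊗H)`. -/
lemma conv_comulantipode_comul :
    conv ((Coalgebra.comul (R := K) (A := H)) ∘ₗ κ) (Coalgebra.comul (R := K)) = convUnit := by
  ext a
  rw [conv_repr _ _ (ℛ K a), convUnit_apply]
  calc ∑ i ∈ (ℛ K a).index,
        (Coalgebra.comul (R := K)) (κ ((ℛ K a).left i)) * (Coalgebra.comul (R := K)) ((ℛ K a).right i)
      = ∑ i ∈ (ℛ K a).index,
          (Coalgebra.comul (R := K)) (κ ((ℛ K a).left i) * (ℛ K a).right i) := by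
        exact Finset.sum_congr rfl fun i _ => (Bialgebra.comul_mul _ _).symm
    _ = (Coalgebra.comul (R := K)) (∑ i ∈ (ℛ K a).index, κ ((ℛ K a).left i) * (ℛ K a).right i) :=
        (map_sum _ _ _).symm
    _ = algebraMap K (H ⊗[K] H) (counit a) := by
        rw [HopfAlgebra.sum_antipode_mul_eq_algebraMap_counit, Bialgebra.comul_algebraMap]

/-- `τ∘(κ⊗κ)∘Δ` is a right convolution inverse of `Δ` in `Hom(H, H⊗H)`. -/
lemma conv_comul_antipodeswap :
    conv (Coalgebra.comul (R := K) (A := H))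
      ((TensorProduct.comm K H H : H ⊗[K] H →ₗ[K] H ⊗[K] H) ∘ₗ TensorProduct.map κ κ ∘ₗ
        Coalgebra.comul (R := K)) = convUnit := by
  ext a
  set G : H →ₗ[K] H ⊗[K] H :=
    (TensorProduct.comm K H H : H ⊗[K] H →ₗ[K] H ⊗[K] H) ∘ₗ TensorProduct.map κ κ ∘ₗ
      Coalgebra.comul (R := K) with hG
  set r := ℛ K a
  set r1 : ∀ i : H × H, Coalgebra.Repr K (r.right i) (H × H) := fun i => ℛ K (r.right i)
  set r2 : ∀ i (j : H × H), Coalgebra.Repr K ((r1 i).left j) (H × H) := fun i j => ℛ K ((r1 i).left j)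
  set r3 : ∀ i (j : H × H), Coalgebra.Repr K ((r1 i).right j) (H × H) := fun i j => ℛ K ((r1 i).right j)
  have hGv : ∀ (v : H), G v = ∑ k ∈ (ℛ K v).index, κ ((ℛ K v).right k) ⊗ₜ[K] κ ((ℛ K v).left k) := by
    intro v
    simp [hG, ← (ℛ K v).eq, map_sum]
  -- Step: compute conv Δ G a
  have step1 : conv (Coalgebra.comul (R := K) (A := H)) G a =
      ∑ i ∈ r.index, ∑ j ∈ (r1 i).index,
        (LinearMap.mul' K (H ⊗[K] H)) ((r.left i ⊗ₜ[K] (r1 i).left j) ⊗ₜ[K] G ((r1 i).right j)) := by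
    have hmap : (TensorProduct.map (Coalgebra.comul (R := K) (A := H)) G) =
        (LinearMap.lTensor (H ⊗[K] H) G) ∘ₗ (LinearMap.rTensor H (Coalgebra.comul (R := K))) := by
      apply TensorProduct.ext'; intro x y; rfl
    have hco : (LinearMap.rTensor H (Coalgebra.comul (R := K))) (Coalgebra.comul (R := K) a) =
        ∑ i ∈ r.index, ∑ j ∈ (r1 i).index, (r.left i ⊗ₜ[K] (r1 i).left j) ⊗ₜ[K] (r1 i).right j := by
      rw [← Coalgebra.coassoc_symm_apply]
      rw [show (LinearMap.lTensor H (Coalgebra.comul (R := K))) (Coalgebra.comul (R := K) a)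
            = ∑ i ∈ r.index, ∑ j ∈ (r1 i).index,
              r.left i ⊗ₜ[K] ((r1 i).left j ⊗ₜ[K] (r1 i).right j) by
        rw [← r.eq, map_sum]
        refine Finset.sum_congr rfl fun i _ => ?_
        rw [LinearMap.lTensor_tmul, ← (r1 i).eq, tmul_sum]]
      rw [map_sum]
      refine Finset.sum_congr rfl fun i _ => ?_
      rw [map_sum]
      exact Finset.sum_congr rfl fun j _ => by rw [assoc_symm_tmul]
    simp only [conv, LinearMap.coe_comp, Function.comp_apply, hmap, hco, map_sum,
      LinearMap.lTensor_tmul]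
  rw [step1]
  -- per-(i) inner computation
  have step2 : ∀ i ∈ r.index,
      ∑ j ∈ (r1 i).index,
        (LinearMap.mul' K (H ⊗[K] H)) ((r.left i ⊗ₜ[K] (r1 i).left j) ⊗ₜ[K] G ((r1 i).right j))
      = (r.left i * κ (r.right i)) ⊗ₜ[K] (1 : H) := by
    intro i _
    -- rewrite each term using repr of right j
    have expand : ∀ j ∈ (r1 i).index,
        (LinearMap.mul' K (H ⊗[K] H)) ((r.left i ⊗ₜ[K] (r1 i).left j) ⊗ₜ[K] G ((r1 i).right j))
        = ∑ k ∈ (r3 i j).index,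
            (r.left i * κ ((r3 i j).right k)) ⊗ₜ[K] ((r1 i).left j * κ ((r3 i j).left k)) := by
      intro j _
      have : G ((r1 i).right j) =
          ∑ k ∈ (r3 i j).index, κ ((r3 i j).right k) ⊗ₜ[K] κ ((r3 i j).left k) := by
        simp [hG, ← (r3 i j).eq, map_sum]
      rw [this, tmul_sum, map_sum]
      exact Finset.sum_congr rfl fun k _ => by
        rw [LinearMap.mul'_apply, Algebra.TensorProduct.tmul_mul_tmul]
    rw [Finset.sum_congr rfl expand]
    -- now use coassoc on (r.right i) to regroup
    have key := Coalgebra.sum_tmul_tmul_eq (r1 i) (r2 i) (r3 i)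
    set Ω : H ⊗[K] (H ⊗[K] H) →ₗ[K] H ⊗[K] H :=
      (TensorProduct.map (LinearMap.mulLeft K (r.left i)) LinearMap.id) ∘ₗ
        (TensorProduct.comm K H H).toLinearMap ∘ₗ
        (TensorProduct.map (LinearMap.mul' K H) LinearMap.id) ∘ₗ
        (TensorProduct.assoc K H H H).symm.toLinearMap ∘ₗ
        (TensorProduct.map LinearMap.id (TensorProduct.map κ κ)) with hΩ
    have hΩ_apply : ∀ p q w : H, Ω (p ⊗ₜ[K] (q ⊗ₜ[K] w)) =
        (r.left i * κ w) ⊗ₜ[K] (p * κ q) := by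
      intro p q w
      simp [hΩ, assoc_symm_tmul]
    apply_fun Ω at key
    simp only [map_sum, hΩ_apply] at key
    rw [← key]
    -- collapse the inner antipode sums
    have inner : ∀ j ∈ (r1 i).index,
        ∑ k ∈ (r2 i j).index,
          (r.left i * κ ((r1 i).right j)) ⊗ₜ[K] ((r2 i j).left k * κ ((r2 i j).right k))
        = Coalgebra.counit (R := K) ((r1 i).left j) •
            ((r.left i * κ ((r1 i).right j)) ⊗ₜ[K] (1 : H)) := by
      intro j _
      rw [← tmul_sum, HopfAlgebra.sum_mul_antipode_eq_algebraMap_counit (r2 i j), Algebra.algebraMap_eq_smul_one,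
        tmul_smul]
    rw [Finset.sum_congr rfl inner]
    have hright : ∑ j ∈ (r1 i).index,
        Coalgebra.counit (R := K) ((r1 i).left j) • (r1 i).right j = r.right i := by
      have h := Coalgebra.sum_counit_tmul_eq (r1 i)
      apply_fun (TensorProduct.lid K H) at h
      rw [map_sum] at h
      simp only [lid_tmul, one_smul] at h
      exact h
    calc ∑ j ∈ (r1 i).index, Coalgebra.counit (R := K) ((r1 i).left j) •
            ((r.left i * κ ((r1 i).right j)) ⊗ₜ[K] (1 : H))
        = (r.left i * κ (∑ j ∈ (r1 i).index,
            Coalgebra.counit (R := K) ((r1 i).left j) • (r1 i).right j)) ⊗ₜ[K] (1 : H) := by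
          rw [map_sum, Finset.mul_sum, sum_tmul]
          exact Finset.sum_congr rfl fun j _ => by
            rw [map_smul, mul_smul_comm, smul_tmul']
      _ = (r.left i * κ (r.right i)) ⊗ₜ[K] (1 : H) := by rw [hright]
  rw [Finset.sum_congr rfl step2, ← sum_tmul, HopfAlgebra.sum_mul_antipode_eq_algebraMap_counit r,
    convUnit_apply, Algebra.TensorProduct.algebraMap_apply]

/-- anti-comultiplicativity of the antipode -/
lemma comul_comp_antipode :
    (Coalgebra.comul (R := K) (A := H)) ∘ₗ κ =
      (TensorProduct.comm K H H : H ⊗[K] H →ₗ[K] H ⊗[K] H) ∘ₗ TensorProduct.map κ κ ∘ₗ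
        Coalgebra.comul (R := K) :=
  conv_inv_unique conv_comulantipode_comul conv_comul_antipodeswap
end Hopf

section AntipodeOne
variable {K : Type*} [CommRing K] {H : Type*} [Ring H] [HopfAlgebra K H]

lemma antipode_one_aux : HopfAlgebra.antipode (R := K) (1 : H) = 1 := by
  have h := HopfAlgebra.mul_antipode_rTensor_comul_apply (R := K) (A := H) (1 : H)
  have hc : Coalgebra.comul (R := K) (1 : H) = (1 : H) ⊗ₜ[K] (1 : H) := by
    simpa [Algebra.TensorProduct.one_def] using map_one (Bialgebra.comulAlgHom K H)
  rw [hc] at h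
  simpa using h
end AntipodeOne

section Main
variable {K A H : Type*} [CommRing K] [Ring A] [Ring H]
    [HopfAlgebra K A] [HopfAlgebra K H]
    (π : A →ₐc[K] H) (i : H →ₐc[K] A)

local notation "κH" => HopfAlgebra.antipode (R := K) (A := H)

noncomputable def gmap : A →ₗ[K] A :=
  (i : H →ₗ[K] A) ∘ₗ κH ∘ₗ (π : A →ₗ[K] H)

noncomputable def Qmap : A →ₗ[K] A ⊗[K] H :=
  (TensorProduct.map LinearMap.id (π : A →ₗ[K] H)) ∘ₗ (Coalgebra.comul (R := K))

lemma Qmap_mul (x y : A) : Qmap π (x * y) = Qmap π x * Qmap π y := by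
  have hsplit : (TensorProduct.map (LinearMap.id : A →ₗ[K] A) (π : A →ₗ[K] H)) =
      (Algebra.TensorProduct.map (AlgHom.id K A) (π : A →ₐ[K] H)).toLinearMap := by
    apply TensorProduct.ext'; intro x y; rfl
  simp only [Qmap, LinearMap.coe_comp, Function.comp_apply, Bialgebra.comul_mul, hsplit,
    AlgHom.toLinearMap_apply, map_mul]

variable (hπi : π.comp i = BialgHom.id K H)
include hπi

lemma pi_i_linear : (π : A →ₗ[K] H) ∘ₗ (i : H →ₗ[K] A) = LinearMap.id := by
  ext h
  exact DFunLike.congr_fun hπi h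

/-- Part 1: invariant elements are fixed by Π. -/
lemma piMap_fixed {b : A} (hb : Qmap π b = b ⊗ₜ[K] (1 : H)) :
    conv LinearMap.id (gmap π i) b = b := by
  have hsplit : (TensorProduct.map (LinearMap.id : A →ₗ[K] A) (gmap π i)) =
      (TensorProduct.map LinearMap.id ((i : H →ₗ[K] A) ∘ₗ κH)) ∘ₗ
        (TensorProduct.map LinearMap.id (π : A →ₗ[K] H)) := by
    apply TensorProduct.ext'; intro x y; rfl
  have : conv LinearMap.id (gmap π i) b =
      (LinearMap.mul' K A) ((TensorProduct.map LinearMap.id ((i : H →ₗ[K] A) ∘ₗ κH))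
        (Qmap π b)) := by
    simp only [conv, Qmap, LinearMap.coe_comp, Function.comp_apply, hsplit]
  rw [this, hb]
  simp [antipode_one_aux]

/-- Q is Pi composed-style convolution. -/
lemma Q_piMap_eq_conv (a : A) :
    Qmap π (conv LinearMap.id (gmap π i) a) =
      conv (Qmap π) ((Qmap π) ∘ₗ (gmap π i)) a := by
  rw [conv_repr _ _ (ℛ K a), conv_repr _ _ (ℛ K a), map_sum]
  exact Finset.sum_congr rfl fun k _ => by
    rw [LinearMap.id_apply, Qmap_mul, LinearMap.comp_apply]

noncomputable def iota1 : A →ₗ[K] A ⊗[K] H := (TensorProduct.mk K A H).flip 1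
noncomputable def jmap : A →ₗ[K] A ⊗[K] H := (TensorProduct.mk K A H 1) ∘ₗ (π : A →ₗ[K] H)
noncomputable def f1 : A →ₗ[K] A ⊗[K] H :=
  (TensorProduct.mk K A H 1) ∘ₗ κH ∘ₗ (π : A →ₗ[K] H)
noncomputable def f2 : A →ₗ[K] A ⊗[K] H := ((TensorProduct.mk K A H).flip 1) ∘ₗ (gmap π i)

omit hπi in
lemma Q_eq_conv : Qmap π = conv (iota1 (K := K) (A := A) (H := H)) (jmap π) := by
  ext a
  rw [conv_repr _ _ (ℛ K a)]
  simp only [Qmap, LinearMap.coe_comp, Function.comp_apply, ← (ℛ K a).eq, map_sum,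
    TensorProduct.map_tmul, LinearMap.id_apply, iota1, jmap, LinearMap.flip_apply,
    TensorProduct.mk_apply, Algebra.TensorProduct.tmul_mul_tmul, one_mul, mul_one]

lemma Qg_eq_conv : (Qmap π) ∘ₗ (gmap π i) = conv (f1 π) (f2 π i) := by
  ext y
  -- LHS
  have lhs : (Qmap π) (gmap π i y) =
      (TensorProduct.map (i : H →ₗ[K] A) LinearMap.id)
        ((Coalgebra.comul (R := K)) (κH (π y))) := by
    have h1 : (Coalgebra.comul (R := K)) ((i : H →ₗ[K] A) (κH (π y))) =
        (TensorProduct.map (i : H →ₗ[K] A) (i : H →ₗ[K] A))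
          ((Coalgebra.comul (R := K)) (κH (π y))) :=
      (CoalgHomClass.map_comp_comul_apply i _).symm
    have h2 : (TensorProduct.map (LinearMap.id : A →ₗ[K] A) (π : A →ₗ[K] H)) ∘ₗ
        (TensorProduct.map (i : H →ₗ[K] A) (i : H →ₗ[K] A)) =
        (TensorProduct.map (i : H →ₗ[K] A) LinearMap.id) := by
      rw [← TensorProduct.map_comp, LinearMap.id_comp, pi_i_linear π i hπi]
    calc (Qmap π) (gmap π i y)
        = (TensorProduct.map LinearMap.id (π : A →ₗ[K] H))
            ((Coalgebra.comul (R := K)) ((i : H →ₗ[K] A) (κH (π y)))) := rfl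
      _ = _ := by rw [h1, ← LinearMap.comp_apply, h2]
  rw [LinearMap.comp_apply, lhs]
  -- expand comul (κ (π y)) via anti-comultiplicativity
  have h3 : (Coalgebra.comul (R := K)) (κH (π y)) =
      (TensorProduct.comm K H H) ((TensorProduct.map κH κH)
        ((Coalgebra.comul (R := K)) (π y))) :=
    LinearMap.congr_fun (comul_comp_antipode (K := K) (H := H)) (π y)
  have h4 : (Coalgebra.comul (R := K)) (π y) =
      ∑ k ∈ (ℛ K y).index, π ((ℛ K y).left k) ⊗ₜ[K] π ((ℛ K y).right k) := by
    rw [← CoalgHomClass.map_comp_comul_apply π y, ← (ℛ K y).eq, map_sum]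
    rfl
  rw [h3, h4, map_sum, map_sum, map_sum, conv_repr _ _ (ℛ K y)]
  refine Finset.sum_congr rfl fun k _ => ?_
  simp only [TensorProduct.map_tmul, TensorProduct.comm_tmul, LinearMap.id_apply,
    f1, f2, gmap, LinearMap.coe_comp, Function.comp_apply, LinearMap.flip_apply,
    TensorProduct.mk_apply, Algebra.TensorProduct.tmul_mul_tmul, one_mul, mul_one]
  rfl

omit hπi in
lemma conv_j_f1 : conv (jmap π) (f1 π) = convUnit := by
  ext a
  rw [conv_repr _ _ (ℛ K a), convUnit_apply]
  let rπ : Coalgebra.Repr K (π a) (A × A) :=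
    { index := (ℛ K a).index
      left := fun k => π ((ℛ K a).left k)
      right := fun k => π ((ℛ K a).right k)
      eq := by
        rw [← CoalgHomClass.map_comp_comul_apply π a, ← (ℛ K a).eq, map_sum]; rfl }
  have hsum := HopfAlgebra.sum_mul_antipode_eq_algebraMap_counit (R := K) rπ
  calc ∑ k ∈ (ℛ K a).index, jmap π ((ℛ K a).left k) * f1 π ((ℛ K a).right k)
      = (1 : A) ⊗ₜ[K] ∑ k ∈ rπ.index, rπ.left k * κH (rπ.right k) := by
        rw [tmul_sum]
        refine Finset.sum_congr rfl fun k _ => ?_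
        simp only [jmap, f1, LinearMap.coe_comp, Function.comp_apply, TensorProduct.mk_apply,
          Algebra.TensorProduct.tmul_mul_tmul, one_mul]
        rfl
    _ = algebraMap K (A ⊗[K] H) (Coalgebra.counit (R := K) a) := by
        rw [hsum, CoalgHomClass.counit_comp_apply π a, Algebra.TensorProduct.algebraMap_apply,
          Algebra.algebraMap_eq_smul_one (A := H), tmul_smul, smul_tmul',
          ← Algebra.algebraMap_eq_smul_one]
lemma conv_iota1_f2 (a : A) :
    conv (iota1 (K := K) (A := A) (H := H)) (f2 π i) a =
      (conv LinearMap.id (gmap π i) a) ⊗ₜ[K] (1 : H) := by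
  rw [conv_repr _ _ (ℛ K a), conv_repr _ _ (ℛ K a), sum_tmul]
  refine Finset.sum_congr rfl fun k _ => ?_
  simp only [iota1, f2, LinearMap.coe_comp, Function.comp_apply, LinearMap.flip_apply,
    TensorProduct.mk_apply, Algebra.TensorProduct.tmul_mul_tmul, one_mul, mul_one,
    LinearMap.id_apply]

/-- Part 2: Π a is right π-invariant. -/
lemma Q_piMap (a : A) :
    Qmap π (conv LinearMap.id (gmap π i) a) =
      (conv LinearMap.id (gmap π i) a) ⊗ₜ[K] (1 : H) := by
  rw [Q_piMap_eq_conv π i hπi a, Qg_eq_conv π i hπi, Q_eq_conv π,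
    conv_assoc, ← conv_assoc (jmap π), conv_j_f1 π, conv_unit_left]
  exact conv_iota1_f2 π i hπi a

end Main

open TensorProduct

/-- `Π` is idempotent and its image is exactly the set of right `π`-invariant
elements of `A`, i.e. `Π(A) = { b ∈ A : (id_A ⊗ π)(Δ(b)) = b ⊗ 1_H }`. -/
theorem statement0 (K A H : Type*) [CommRing K] [Ring A] [Ring H]
    [HopfAlgebra K A] [HopfAlgebra K H]
    (π : A →ₐc[K] H) (i : H →ₐc[K] A)
    (hπi : π.comp i = BialgHom.id K H) :
    (PiMap K π i) ∘ₗ (PiMap K π i) = PiMap K π i ∧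
      ∀ b : A,
        b ∈ LinearMap.range (PiMap K π i) ↔
          (TensorProduct.map (LinearMap.id : A →ₗ[K] A) (π : A →ₗ[K] H))
              (Coalgebra.comul (R := K) b) = b ⊗ₜ[K] (1 : H) := by
  have hPi : PiMap K π i = conv LinearMap.id (gmap π i) := rfl
  have hQ : ∀ b : A, (TensorProduct.map (LinearMap.id : A →ₗ[K] A) (π : A →ₗ[K] H))
      (Coalgebra.comul (R := K) b) = Qmap π b := fun b => rfl
  constructor
  · ext a
    rw [LinearMap.comp_apply, hPi]
    exact piMap_fixed π i hπi (Q_piMap π i hπi a)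
  · intro b
    constructor
    · rintro ⟨a, rfl⟩
      rw [hQ, hPi]
      exact Q_piMap π i hπi a
    · intro hb
      refine ⟨b, ?_⟩
      rw [hPi]
      exact piMap_fixed π i hπi (by rw [← hQ]; exact hb)
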